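/- Suppose generators A_n of a representation of the Onsager algebra are given by A_m = 2 Σ_{j=1}^n (e_j^+ z_j^m + e_j^- z_j^{-m}) and G_k = Σ_{j=1}^n h_j (z_j^k - z_j^{-k}), where for each j the triple (e_j^±, h_j) satisfies sl₂ relations [h_j, e_k^±] = ±2 δ_{jk} e_j^±, [e_j^+, e_k^-] = δ_{jk} h_j, different j's commute, and z_1,...,z_n are nonzero complex numbers. Then A_m, G_ℓ satisfy the Onsager algebra relations [A_ℓ, A_m] = 4G_{ℓ-m}, [G_ℓ, A_m] = 2A_{m+ℓ} - 2A_{m-ℓ}, [G_ℓ, G_m] = 0, and the A_m satisfy a linear recurrence of order 2n with characteristic roots z_j, z_j^{-1}. -/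

import Mathlib

open scoped BigOperators

/-- The `k`-th elementary symmetric polynomial of `α_1, …, α_n`. -/
noncomputable def esymm {n : ℕ} (α : Fin n → ℂ) (k : ℕ) : ℂ :=
  ∑ s ∈ Finset.powersetCard k (Finset.univ : Finset (Fin n)), ∏ i ∈ s, α i

private lemma lie_sum' {L : Type*} [LieRing L] {ι : Type*} (s : Finset ι) (x : L) (f : ι → L) :
    ⁅x, ∑ i ∈ s, f i⁆ = ∑ i ∈ s, ⁅x, f i⁆ := by
  induction s using Finset.cons_induction with
  | empty => simp
  | cons a s ha ih => rw [Finset.sum_cons, Finset.sum_cons, lie_add, ih]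

private lemma sum_lie' {L : Type*} [LieRing L] {ι : Type*} (s : Finset ι) (x : L) (f : ι → L) :
    ⁅∑ i ∈ s, f i, x⁆ = ∑ i ∈ s, ⁅f i, x⁆ := by
  induction s using Finset.cons_induction with
  | empty => simp
  | cons a s ha ih => rw [Finset.sum_cons, Finset.sum_cons, add_lie, ih]

private lemma esymm_gen {n : ℕ} (α : Fin n → ℂ) (x : ℂ) :
    ∑ k ∈ Finset.range (n + 1), ((-1 : ℂ) ^ k * esymm α k) * x ^ k
      = ∏ i, (1 - α i * x) := by
  have h : ∀ i ∈ (Finset.univ : Finset (Fin n)), (1 - α i * x) = (-(α i * x)) + 1 := by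
    intro i _; ring
  rw [Finset.prod_congr rfl h, Finset.prod_add]
  rw [Finset.powerset_card_biUnion,
    Finset.sum_biUnion (Finset.univ.pairwise_disjoint_powersetCard.set_pairwise _)]
  rw [Finset.card_univ, Fintype.card_fin]
  refine Finset.sum_congr rfl fun k hk => ?_
  rw [esymm, Finset.mul_sum, Finset.sum_mul]
  refine Finset.sum_congr rfl fun t ht => ?_
  have hc : t.card = k := (Finset.mem_powersetCard.mp ht).2
  have h2 : ∀ i ∈ t, -(α i * x) = (-1) * α i * x := by intro i _; ring
  rw [Finset.prod_congr rfl h2, Finset.prod_mul_distrib, Finset.prod_mul_distrib,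
    Finset.prod_const, Finset.prod_const, Finset.prod_const_one, hc]
  ring

/-- Davies' realization: given `n` commuting copies `(e_j^±, h_j)` of `sl₂`
acting on a vector space and nonzero numbers `z_1, …, z_n`, the operators
`A_m = 2 Σ_j (e_j^+ z_j^m + e_j^- z_j^{-m})` and
`G_k = Σ_j h_j (z_j^k - z_j^{-k})` satisfy the Onsager algebra relations
`[A_ℓ, A_m] = 4 G_{ℓ-m}`, `[G_ℓ, A_m] = 2 A_{m+ℓ} - 2 A_{m-ℓ}`,
`[G_ℓ, G_m] = 0`, and the `A_m` satisfy a linear recurrence of order `2n`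
with characteristic roots `z_j, z_j^{-1}`. -/
theorem stmt18 {V : Type*} [AddCommGroup V] [Module ℂ V] (n : ℕ)
    (ep em hh : Fin n → Module.End ℂ V)
    (h_ep : ∀ j k, ⁅hh j, ep k⁆ = if j = k then 2 • ep k else 0)
    (h_em : ∀ j k, ⁅hh j, em k⁆ = if j = k then -(2 • em k) else 0)
    (ep_em : ∀ j k, ⁅ep j, em k⁆ = if j = k then hh j else 0)
    (h_h : ∀ j k, ⁅hh j, hh k⁆ = 0)
    (ep_ep : ∀ j k, j ≠ k → ⁅ep j, ep k⁆ = 0)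
    (em_em : ∀ j k, j ≠ k → ⁅em j, em k⁆ = 0)
    (z : Fin n → ℂ) (hz : ∀ j, z j ≠ 0)
    (A : ℤ → Module.End ℂ V) (G : ℤ → Module.End ℂ V)
    (hA : ∀ m : ℤ, A m = 2 • ∑ j, ((z j ^ m) • ep j + (z j ^ (-m)) • em j))
    (hG : ∀ k : ℤ, G k = ∑ j, (z j ^ k - z j ^ (-k)) • hh j) :
    (∀ l m : ℤ, ⁅A l, A m⁆ = 4 • G (l - m)) ∧
    (∀ l m : ℤ, ⁅G l, A m⁆ = 2 • A (m + l) - 2 • A (m - l)) ∧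
    (∀ l m : ℤ, ⁅G l, G m⁆ = 0) ∧
    (∀ m : ℤ, ∑ k ∈ Finset.range (2 * n + 1),
      ((-1 : ℂ) ^ k * esymm (Fin.append z (fun j => (z j)⁻¹)) k) • A (m - k)
        = 0) := by
  classical
  letI : LieRing (Module.End ℂ V) := LieRing.ofAssociativeRing
  have nsm : ∀ (c : ℕ) (T : Module.End ℂ V), c • T = ((c : ℂ)) • T := fun c T =>
    (Nat.cast_smul_eq_nsmul ℂ c T).symm
  have em_ep : ∀ j k, ⁅em j, ep k⁆ = if j = k then -(hh j) else 0 := by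
    intro j k
    rw [← lie_skew, ep_em k j]
    by_cases h : j = k
    · subst h; simp
    · rw [if_neg (Ne.symm h), if_neg h, neg_zero]
  have zadd : ∀ (j : Fin n) (a b : ℤ), z j ^ (a + b) = z j ^ a * z j ^ b := fun j a b =>
    zpow_add₀ (hz j) a b
  have zsub : ∀ (j : Fin n) (a b : ℤ), z j ^ (a - b) = z j ^ a * z j ^ (-b) := by
    intro j a b; rw [sub_eq_add_neg, zadd]
  -- Part 1
  have key1 : ∀ (l m : ℤ) (j k : Fin n),
      ⁅(z j ^ l) • ep j + (z j ^ (-l)) • em j, (z k ^ m) • ep k + (z k ^ (-m)) • em k⁆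
        = if j = k then (z j ^ (l - m) - z j ^ (m - l)) • hh j else 0 := by
    intro l m j k
    simp only [lie_add, add_lie, lie_smul, smul_lie]
    by_cases h : j = k
    · subst h
      rw [ep_em j j, em_ep j j, if_pos rfl, if_pos rfl, lie_self, lie_self, if_pos rfl]
      rw [zsub j l m, zsub j m l]
      simp only [smul_zero, zero_add, add_zero, smul_neg, smul_smul, sub_smul, neg_smul]
      module
    · rw [ep_ep j k h, em_em j k h, ep_em j k, em_ep j k, if_neg h, if_neg h, if_neg h]
      simp
  have part1 : ∀ l m : ℤ, ⁅A l, A m⁆ = 4 • G (l - m) := by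
    intro l m
    rw [hA l, hA m, hG]
    simp only [nsm]
    rw [lie_smul, smul_lie, smul_smul]
    rw [sum_lie']
    have : ∀ j ∈ (Finset.univ : Finset (Fin n)),
        ⁅(z j ^ l) • ep j + (z j ^ (-l)) • em j,
          ∑ k, ((z k ^ m) • ep k + (z k ^ (-m)) • em k)⁆
          = (z j ^ (l - m) - z j ^ (-(l - m))) • hh j := by
      intro j _
      rw [lie_sum']
      rw [Finset.sum_congr rfl fun k _ => key1 l m j k]
      rw [Finset.sum_ite_eq, if_pos (Finset.mem_univ j)]
      congr 2
      rw [neg_sub]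
    rw [Finset.sum_congr rfl this]
    norm_num
  -- Part 2
  have key2 : ∀ (l m : ℤ) (j k : Fin n),
      ⁅(z j ^ l - z j ^ (-l)) • hh j, (z k ^ m) • ep k + (z k ^ (-m)) • em k⁆
        = if j = k then
            (2 : ℂ) • ((z j ^ (m + l) - z j ^ (m - l)) • ep j
              + (z j ^ (-(m + l)) - z j ^ (-(m - l))) • em j)
          else 0 := by
    intro l m j k
    simp only [lie_add, lie_smul, smul_lie, h_ep, h_em]
    by_cases h : j = k
    · subst h
      rw [if_pos rfl, if_pos rfl, if_pos rfl, nsm 2 (ep j), nsm 2 (em j)]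
      rw [zadd j m l, zsub j m l]
      have e1 : z j ^ (-(m + l)) = z j ^ (-m) * z j ^ (-l) := by
        rw [neg_add, zadd]
      have e2 : z j ^ (-(m - l)) = z j ^ (-m) * z j ^ l := by
        rw [neg_sub, sub_eq_add_neg, add_comm, zadd]
      rw [e1, e2]
      simp only [smul_smul, sub_smul, smul_neg, smul_sub]
      push_cast
      module
    · rw [if_neg h, if_neg h, if_neg h]
      simp
  have part2 : ∀ l m : ℤ, ⁅G l, A m⁆ = 2 • A (m + l) - 2 • A (m - l) := by
    intro l m
    rw [hG, hA m, hA (m + l), hA (m - l)]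
    simp only [nsm]
    rw [lie_smul, sum_lie']
    have : ∀ j ∈ (Finset.univ : Finset (Fin n)),
        ⁅(z j ^ l - z j ^ (-l)) • hh j,
          ∑ k, ((z k ^ m) • ep k + (z k ^ (-m)) • em k)⁆
          = (2 : ℂ) • ((z j ^ (m + l) - z j ^ (m - l)) • ep j
              + (z j ^ (-(m + l)) - z j ^ (-(m - l))) • em j) := by
      intro j _
      rw [lie_sum']
      rw [Finset.sum_congr rfl fun k _ => key2 l m j k]
      rw [Finset.sum_ite_eq, if_pos (Finset.mem_univ j)]
    rw [Finset.sum_congr rfl this]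
    simp only [Finset.smul_sum]
    rw [← Finset.sum_sub_distrib]
    refine Finset.sum_congr rfl fun j _ => ?_
    module
  -- Part 3
  have part3 : ∀ l m : ℤ, ⁅G l, G m⁆ = 0 := by
    intro l m
    rw [hG, hG, sum_lie']
    have : ∀ j ∈ (Finset.univ : Finset (Fin n)),
        ⁅(z j ^ l - z j ^ (-l)) • hh j, ∑ k, (z k ^ m - z k ^ (-m)) • hh k⁆ = 0 := by
      intro j _
      rw [lie_sum']
      refine Finset.sum_eq_zero fun k _ => ?_
      rw [lie_smul, smul_lie, h_h]
      simp
    rw [Finset.sum_congr rfl this, Finset.sum_const_zero]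
  -- Part 4
  refine ⟨part1, part2, part3, ?_⟩
  intro m
  set α : Fin (n + n) → ℂ := Fin.append z (fun j => (z j)⁻¹) with hα
  have h2n : 2 * n + 1 = n + n + 1 := by rw [two_mul]
  have gen : ∀ x : ℂ, ∑ k ∈ Finset.range (2 * n + 1), ((-1 : ℂ) ^ k * esymm α k) * x ^ k
      = ∏ i, (1 - α i * x) := by
    intro x; rw [h2n]; exact esymm_gen α x
  have hz1 : ∀ j, ∑ k ∈ Finset.range (2 * n + 1),
      ((-1 : ℂ) ^ k * esymm α k) * z j ^ (m - (k : ℤ)) = 0 := by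
    intro j
    have e : ∀ k ∈ Finset.range (2 * n + 1),
        ((-1 : ℂ) ^ k * esymm α k) * z j ^ (m - (k : ℤ))
          = (((-1 : ℂ) ^ k * esymm α k) * ((z j)⁻¹) ^ k) * z j ^ m := by
      intro k _
      rw [zpow_sub₀ (hz j), zpow_natCast, div_eq_mul_inv, inv_pow]
      ring
    rw [Finset.sum_congr rfl e, ← Finset.sum_mul, gen ((z j)⁻¹)]
    rw [Finset.prod_eq_zero (Finset.mem_univ (Fin.castAdd n j)), zero_mul]
    rw [hα, Fin.append_left, mul_inv_cancel₀ (hz j), sub_self]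
  have hz2 : ∀ j, ∑ k ∈ Finset.range (2 * n + 1),
      ((-1 : ℂ) ^ k * esymm α k) * z j ^ (-(m - (k : ℤ))) = 0 := by
    intro j
    have e : ∀ k ∈ Finset.range (2 * n + 1),
        ((-1 : ℂ) ^ k * esymm α k) * z j ^ (-(m - (k : ℤ)))
          = (((-1 : ℂ) ^ k * esymm α k) * (z j) ^ k) * z j ^ (-m) := by
      intro k _
      rw [neg_sub, sub_eq_add_neg, zadd j, zpow_natCast]
      ring
    rw [Finset.sum_congr rfl e, ← Finset.sum_mul, gen (z j)]
    rw [Finset.prod_eq_zero (Finset.mem_univ (Fin.natAdd n j)), zero_mul]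
    rw [hα, Fin.append_right, inv_mul_cancel₀ (hz j), sub_self]
  have expand : ∀ k ∈ Finset.range (2 * n + 1),
      ((-1 : ℂ) ^ k * esymm α k) • A (m - k)
        = ∑ j, ((((-1 : ℂ) ^ k * esymm α k) * z j ^ (m - (k : ℤ))) • ((2 : ℂ) • ep j)
            + (((-1 : ℂ) ^ k * esymm α k) * z j ^ (-(m - (k : ℤ)))) • ((2 : ℂ) • em j)) := by
    intro k _
    rw [hA, nsm]
    simp only [Finset.smul_sum]
    refine Finset.sum_congr rfl fun j _ => ?_
    push_cast
    module
  rw [Finset.sum_congr rfl expand, Finset.sum_comm]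
  refine Finset.sum_eq_zero fun j _ => ?_
  rw [Finset.sum_add_distrib, ← Finset.sum_smul, ← Finset.sum_smul, hz1 j, hz2 j,
    zero_smul, zero_smul, add_zero]
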